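/- (Greedy policy sensitivity.) Let m, k ≥ 1, μ > 0, K_u, P_*, ε, ρ ≥ 0, and let U ⊆ ℝ^m be a convex set. Let f, f̃ : ℝ^m → ℝ^k be differentiable with ‖Df(u)‖_{op} ≤ K_u and ‖Df(u) − Df̃(u)‖_{op} ≤ ε for all u ∈ U, and let L : ℝ^m → ℝ be differentiable. For p ∈ ℝ^k with |p| ≤ P_*, assume u ↦ f(u)·p + L(u) and u ↦ f̃(u)·p + L(u) are μ-strongly convex on U for all |p| ≤ P_*, and denote by G_f(p) and G_{f̃}(p) their (unique) minimizers over U. Let p, p̃ ∈ ℝ^k with |p|, |p̃| ≤ P_*, let u = G_f(p), and let ũ ∈ U satisfy |ũ − G_{f̃}(p̃)| ≤ ρ. Then |ũ − u| ≤ ρ + (P_*/μ) ε + (K_u/μ) |p̃ − p|. -/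

import Mathlib

open scoped RealInnerProductSpace

noncomputable section

set_option maxHeartbeats 1000000

lemma strong_min_growth {E : Type*} [NormedAddCommGroup E] [NormedSpace ℝ E]
    {U : Set E} {μ : ℝ} {g : E → ℝ} (hg : StrongConvexOn U μ g)
    {x y : E} (hx : x ∈ U) (hy : y ∈ U) (hmin : IsMinOn g U x) :
    g x + μ / 2 * ‖x - y‖ ^ 2 ≤ g y := by
  have key : ∀ t : ℝ, 0 < t → t ≤ 1 →
      (1 - t) * (μ / 2 * ‖x - y‖ ^ 2) ≤ g y - g x := by
    intro t ht ht1
    have h1 : (0:ℝ) ≤ 1 - t := by linarith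
    have h2 : (1 - t) + t = 1 := by ring
    have hc := hg.2 hx hy h1 ht.le h2
    have hmem : (1 - t) • x + t • y ∈ U := hg.1 hx hy h1 ht.le h2
    have hmx : g x ≤ g ((1 - t) • x + t • y) := hmin hmem
    simp only [smul_eq_mul] at hc
    have h3 : t * ((1 - t) * (μ / 2 * ‖x - y‖ ^ 2)) ≤ t * (g y - g x) := by nlinarith
    exact le_of_mul_le_mul_left h3 ht
  set φ : ℝ := μ / 2 * ‖x - y‖ ^ 2 with hφdef
  have hd : 0 ≤ g y - g x := by have := key 1 one_pos le_rfl; linarith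
  have : φ ≤ g y - g x := by
    by_contra h
    push_neg at h
    set d : ℝ := g y - g x with hddef
    have hφpos : 0 < φ := lt_of_le_of_lt hd h
    have ht : 0 < (φ - d) / (2 * φ) := div_pos (by linarith) (by linarith)
    have ht1 : (φ - d) / (2 * φ) ≤ 1 := by
      rw [div_le_one (by linarith)]; linarith
    have hk := key _ ht ht1
    have heq : (1 - (φ - d) / (2 * φ)) * φ = (φ + d) / 2 := by
      field_simp; ring
    rw [heq] at hk
    linarith
  linarith

/-- Greedy policy sensitivity: combining the Lipschitz dependence on the gradient variable,
the model-error stability, and an inexact-greedy tolerance `ρ`,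
`|ũ − u| ≤ ρ + (P_*/μ) ε + (K_u/μ) |p̃ − p|`. -/
theorem greedy_policy_sensitivity
    (m k : ℕ) (hm : 1 ≤ m) (hk : 1 ≤ k) (μ K_u Pstar ε ρ : ℝ)
    (hμ : 0 < μ) (hK : 0 ≤ K_u) (hP : 0 ≤ Pstar) (hε : 0 ≤ ε) (hρ : 0 ≤ ρ)
    (U : Set (EuclideanSpace ℝ (Fin m))) (hU : Convex ℝ U)
    (f ftil : EuclideanSpace ℝ (Fin m) → EuclideanSpace ℝ (Fin k))
    (hf : Differentiable ℝ f) (hftil : Differentiable ℝ ftil)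
    (hfK : ∀ u ∈ U, ‖fderiv ℝ f u‖ ≤ K_u)
    (hDf : ∀ u ∈ U, ‖fderiv ℝ f u - fderiv ℝ ftil u‖ ≤ ε)
    (L : EuclideanSpace ℝ (Fin m) → ℝ) (hL : Differentiable ℝ L)
    (hΦ : ∀ p : EuclideanSpace ℝ (Fin k), ‖p‖ ≤ Pstar →
      StrongConvexOn U μ (fun u => ⟪f u, p⟫ + L u))
    (hΦtil : ∀ p : EuclideanSpace ℝ (Fin k), ‖p‖ ≤ Pstar →
      StrongConvexOn U μ (fun u => ⟪ftil u, p⟫ + L u))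
    -- the greedy maps: unique minimizers of the two objectives over `U`
    (Gf Gftil : EuclideanSpace ℝ (Fin k) → EuclideanSpace ℝ (Fin m))
    (hGf : ∀ p : EuclideanSpace ℝ (Fin k), ‖p‖ ≤ Pstar →
      Gf p ∈ U ∧ IsMinOn (fun v => ⟪f v, p⟫ + L v) U (Gf p))
    (hGftil : ∀ p : EuclideanSpace ℝ (Fin k), ‖p‖ ≤ Pstar →
      Gftil p ∈ U ∧ IsMinOn (fun v => ⟪ftil v, p⟫ + L v) U (Gftil p))
    (p ptil : EuclideanSpace ℝ (Fin k)) (hp : ‖p‖ ≤ Pstar) (hptil : ‖ptil‖ ≤ Pstar)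
    (u : EuclideanSpace ℝ (Fin m)) (hu : u = Gf p)
    (util : EuclideanSpace ℝ (Fin m)) (hutil : util ∈ U)
    (hnear : ‖util - Gftil ptil‖ ≤ ρ) :
    ‖util - u‖ ≤ ρ + (Pstar / μ) * ε + (K_u / μ) * ‖ptil - p‖ := by
  set a := Gf p with hadef
  set b := Gftil ptil with hbdef
  obtain ⟨ha, hamin⟩ := hGf p hp
  obtain ⟨hb, hbmin⟩ := hGftil ptil hptil
  -- quadratic growth at the two minimizers
  have h1 := strong_min_growth (hΦ p hp) ha hb hamin
  have h2 := strong_min_growth (hΦtil ptil hptil) hb ha hbmin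
  have hrev : ‖a - b‖ = ‖b - a‖ := norm_sub_rev _ _
  rw [hrev] at h1
  have hsum : μ * ‖b - a‖ ^ 2 ≤
      (⟪f b, p⟫ - ⟪ftil b, ptil⟫) - (⟪f a, p⟫ - ⟪ftil a, ptil⟫) := by
    nlinarith [h1, h2]
  -- rewrite the RHS
  have hsplit : (⟪f b, p⟫ - ⟪ftil b, ptil⟫) - (⟪f a, p⟫ - ⟪ftil a, ptil⟫)
      = ⟪f b - f a, p - ptil⟫ + ⟪(f b - ftil b) - (f a - ftil a), ptil⟫ := by
    simp only [inner_sub_left, inner_sub_right]; ring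
  -- Lipschitz bounds from the mean value inequality
  have hLipf : ‖f b - f a‖ ≤ K_u * ‖b - a‖ :=
    hU.norm_image_sub_le_of_norm_fderiv_le (fun x _ => hf x) hfK ha hb
  have hdiff : ∀ x ∈ U, ‖fderiv ℝ (fun v => f v - ftil v) x‖ ≤ ε := by
    intro x hx
    have : fderiv ℝ (fun v => f v - ftil v) x = fderiv ℝ f x - fderiv ℝ ftil x :=
      fderiv_sub (hf x) (hftil x)
    rw [this]; exact hDf x hx
  have hLipd : ‖(f b - ftil b) - (f a - ftil a)‖ ≤ ε * ‖b - a‖ :=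
    hU.norm_image_sub_le_of_norm_fderiv_le
      (fun x _ => (hf x).sub (hftil x)) hdiff ha hb
  -- Cauchy–Schwarz
  have hcs1 : ⟪f b - f a, p - ptil⟫ ≤ ‖f b - f a‖ * ‖p - ptil‖ := real_inner_le_norm _ _
  have hcs2 : ⟪(f b - ftil b) - (f a - ftil a), ptil⟫
      ≤ ‖(f b - ftil b) - (f a - ftil a)‖ * ‖ptil‖ := real_inner_le_norm _ _
  have hnn : (0:ℝ) ≤ ‖b - a‖ := norm_nonneg _
  have hnp : (0:ℝ) ≤ ‖p - ptil‖ := norm_nonneg _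
  have hmain : μ * ‖b - a‖ ^ 2 ≤ (K_u * ‖p - ptil‖ + ε * Pstar) * ‖b - a‖ := by
    rw [hsplit] at hsum
    have e1 : ⟪f b - f a, p - ptil⟫ ≤ K_u * ‖b - a‖ * ‖p - ptil‖ :=
      hcs1.trans (by apply mul_le_mul_of_nonneg_right hLipf hnp)
    have e2 : ⟪(f b - ftil b) - (f a - ftil a), ptil⟫ ≤ ε * ‖b - a‖ * Pstar := by
      refine hcs2.trans ?_
      have := mul_le_mul hLipd hptil (norm_nonneg _) (by positivity)
      linarith
    nlinarith
  have hba : ‖b - a‖ ≤ (Pstar / μ) * ε + (K_u / μ) * ‖ptil - p‖ := by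
    have hrevp : ‖p - ptil‖ = ‖ptil - p‖ := norm_sub_rev _ _
    rcases eq_or_lt_of_le hnn with h0 | h0
    · rw [← h0]; positivity
    · have h2' : μ * ‖b - a‖ * ‖b - a‖ ≤ (K_u * ‖p - ptil‖ + ε * Pstar) * ‖b - a‖ := by
        nlinarith [hmain]
      have h3' : μ * ‖b - a‖ ≤ K_u * ‖p - ptil‖ + ε * Pstar :=
        le_of_mul_le_mul_right h2' h0
      rw [hrevp] at h3'
      rw [div_mul_eq_mul_div, div_mul_eq_mul_div, ← add_div, le_div_iff₀ hμ]
      nlinarith [h3']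
  calc ‖util - u‖ = ‖(util - b) + (b - a)‖ := by rw [hu]; abel_nf
    _ ≤ ‖util - b‖ + ‖b - a‖ := norm_add_le _ _
    _ ≤ ρ + ((Pstar / μ) * ε + (K_u / μ) * ‖ptil - p‖) := add_le_add hnear hba
    _ = ρ + (Pstar / μ) * ε + (K_u / μ) * ‖ptil - p‖ := by ring
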